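/- Let m ≥ 1 and let E ⊆ ℝ^m be countable. Define transfinitely E^0 = E, E^{χ+1} = E^χ ∩ gd(E^χ) for every ordinal χ, and E^χ = ⋂_{ψ < χ} E^ψ for every limit ordinal χ. Then E is a conical limit set if and only if there exists an ordinal χ such that E^χ = ∅. -/

import Mathlib

open Filter Topology

/-- The open upper half-space over a normed space `V`: pairs `(t, v)` with `t > 0`. -/
def upperHalf (V : Type*) [NormedAddCommGroup V] : Set (ℝ × V) := {p | 0 < p.1}

/-- The conical limit set of `E ⊆ ℝ × V`: points `x` for which there are `C > 0` and a
sequence `(t_n, v_n)` in `E` with `t_n → 0`, `v_n → x` and `‖v_n - x‖ ≤ C * t_n`. -/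
def conicalLimitSet {V : Type*} [NormedAddCommGroup V] (E : Set (ℝ × V)) : Set V :=
  {x | ∃ C > 0, ∃ w : ℕ → ℝ × V, (∀ n, w n ∈ E) ∧
    Tendsto (fun n => (w n).1) atTop (𝓝 (0 : ℝ)) ∧
    Tendsto (fun n => (w n).2) atTop (𝓝 x) ∧
    ∀ n, ‖(w n).2 - x‖ ≤ C * (w n).1}

/-- `X ⊆ V` is a conical limit set if it is the conical limit set of some subset of the
upper half-space. -/
def IsConicalLimitSet {V : Type*} [NormedAddCommGroup V] (X : Set V) : Prop :=
  ∃ E ⊆ upperHalf V, conicalLimitSet E = X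

/-- The set of good points of `E`: `z ∈ gd E` iff for every `ε > 0` there is `δ > 0`
such that every `v` with `0 < ‖v - z‖ < δ` lies within `ε * ‖v - z‖` of a point of `E`. -/
def gd {V : Type*} [NormedAddCommGroup V] (E : Set V) : Set V :=
  {z | ∀ ε > 0, ∃ δ > 0, ∀ v, 0 < ‖v - z‖ → ‖v - z‖ < δ → ∃ x ∈ E, ‖x - v‖ < ε * ‖v - z‖}

/-- Transfinite iteration: `gdIter E 0 = E`, `gdIter E (χ+1) = gdIter E χ ∩ gd (gdIter E χ)`,
and `gdIter E χ = ⋂_{ψ < χ} gdIter E ψ` at limit ordinals `χ`. -/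
noncomputable def gdIter {V : Type*} [NormedAddCommGroup V] (E : Set V) (χ : Ordinal) :
    Set V :=
  Ordinal.limitRecOn χ E (fun _ S => S ∩ gd S)
    (fun χ _ ih => ⋂ (ψ : Ordinal) (h : ψ < χ), ih ψ h)

universe u

section Aux

variable {V : Type} [NormedAddCommGroup V]

lemma gdIter_zero (E : Set V) : gdIter E 0 = E :=
  Ordinal.limitRecOn_zero _ _ _

lemma gdIter_succ (E : Set V) (χ : Ordinal.{u}) :
    gdIter E (Order.succ χ) = gdIter E χ ∩ gd (gdIter E χ) :=
  Ordinal.limitRecOn_succ _ _ _ _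

lemma gdIter_limit (E : Set V) {χ : Ordinal.{u}} (h : Order.IsSuccLimit χ) :
    gdIter E χ = ⋂ (ψ : Ordinal.{u}) (_ : ψ < χ), gdIter E ψ :=
  Ordinal.limitRecOn_limit _ _ _ _ h

lemma gdIter_anti (E : Set V) : ∀ (χ ψ : Ordinal.{u}), ψ ≤ χ → gdIter E χ ⊆ gdIter E ψ := by
  intro χ
  induction χ using Ordinal.induction with
  | _ χ IH =>
    rcases Ordinal.zero_or_succ_or_isSuccLimit χ with h0 | ⟨a, ha⟩ | hl
    · subst h0
      intro ψ hψ
      rw [nonpos_iff_eq_zero.mp hψ]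
    · subst ha
      intro ψ hψ
      rcases Order.le_succ_iff_eq_or_le.mp hψ with rfl | hle
      · exact subset_rfl
      · calc gdIter E (Order.succ a) ⊆ gdIter E a := by
              rw [gdIter_succ]; exact Set.inter_subset_left
          _ ⊆ gdIter E ψ := IH a (Order.lt_succ a) ψ hle
    · intro ψ hψ
      rcases eq_or_lt_of_le hψ with rfl | hlt
      · exact subset_rfl
      · rw [gdIter_limit E hl]
        exact Set.biInter_subset_of_mem hlt

lemma gdIter_subset (E : Set V) (χ : Ordinal.{u}) : gdIter E χ ⊆ E := by
  have := gdIter_anti.{u} E χ 0 (zero_le (a := χ))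
  rwa [gdIter_zero] at this

lemma notgd {S : Set V} {x : V} (h : x ∉ gd S) :
    ∃ ε > 0, ∀ δ > 0, ∃ v, 0 < ‖v - x‖ ∧ ‖v - x‖ < δ ∧
      ∀ z ∈ S, ε * ‖v - x‖ ≤ ‖z - v‖ := by
  have h' : ¬ ∀ ε > 0, ∃ δ > 0, ∀ v, 0 < ‖v - x‖ → ‖v - x‖ < δ →
      ∃ z ∈ S, ‖z - v‖ < ε * ‖v - x‖ := h
  push_neg at h'
  obtain ⟨ε, hε, h'⟩ := h'
  refine ⟨ε, hε, fun δ hδ => ?_⟩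
  obtain ⟨v, h1, h2, h3⟩ := h' δ hδ
  exact ⟨v, h1, h2, h3⟩

lemma exists_rank (E : Set V) (hemp : ∃ χ : Ordinal.{u}, gdIter E χ = ∅) {x : V} (hx : x ∈ E) :
    ∃ r : Ordinal.{u}, x ∈ gdIter E r ∧ x ∉ gd (gdIter E r) := by
  obtain ⟨χ₀, hχ₀⟩ := hemp
  set S : Set Ordinal.{u} := {χ | x ∉ gdIter E χ} with hS
  have hSne : S.Nonempty := ⟨χ₀, by simp [hS, hχ₀]⟩
  have hmem : sInf S ∈ S := csInf_mem hSne
  have hmin : ∀ ψ, ψ < sInf S → x ∈ gdIter E ψ := by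
    intro ψ hψ
    by_contra hc
    exact absurd (csInf_le (OrderBot.bddBelow S) hc) (not_le_of_gt hψ)
  rcases Ordinal.zero_or_succ_or_isSuccLimit (sInf S) with h0 | ⟨r, hr⟩ | hl
  · exfalso
    rw [hS] at hmem
    rw [h0] at hmem
    exact hmem (by rwa [gdIter_zero])
  · refine ⟨r, hmin r (by rw [← hr]; exact Order.lt_succ r), fun hgd => ?_⟩
    have : x ∈ gdIter E (Order.succ r) := by
      rw [gdIter_succ]
      exact ⟨hmin r (by rw [← hr]; exact Order.lt_succ r), hgd⟩
    rw [hr] at this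
    exact hmem this
  · exfalso
    have : x ∈ gdIter E (sInf S) := by
      rw [gdIter_limit E hl]
      exact Set.mem_iInter₂.mpr fun ψ hψ => hmin ψ hψ
    exact hmem this

lemma exists_kernel (E : Set V) (h : ∀ χ : Ordinal.{u}, gdIter E χ ≠ ∅) :
    ∃ F : Set V, F.Nonempty ∧ F ⊆ E ∧ F ⊆ gd F := by
  classical
  set D : Set V := {x | ∃ χ : Ordinal.{u}, x ∉ gdIter E χ} with hD
  have hmu : ∀ x : D, ∃ χ : Ordinal.{u}, (x : V) ∉ gdIter E χ := fun x => x.2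
  choose mu hmu' using hmu
  set Θ : Ordinal.{u} := ⨆ x : D, mu x with hΘ
  have hbdd : BddAbove (Set.range mu) := Ordinal.bddAbove_range _
  have hnotD : ∀ y ∈ gdIter E (Θ + 1), y ∉ D := by
    intro y hy hyD
    have hle : mu ⟨y, hyD⟩ ≤ Θ := le_ciSup hbdd _
    have hsub : gdIter E (Θ + 1) ⊆ gdIter E (mu ⟨y, hyD⟩) :=
      gdIter_anti E _ _ (hle.trans (le_of_lt (by
        rw [Ordinal.add_one_eq_succ]; exact Order.lt_succ Θ)))
    exact hmu' ⟨y, hyD⟩ (hsub hy)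
  refine ⟨gdIter E (Θ + 1), Set.nonempty_iff_ne_empty.mpr (h _), gdIter_subset E _, ?_⟩
  intro y hy
  have hall : ∀ χ : Ordinal.{u}, y ∈ gdIter E χ := by
    intro χ; by_contra hc; exact hnotD y hy ⟨χ, hc⟩
  have h2 : y ∈ gdIter E (Order.succ (Θ + 1)) := hall _
  rw [gdIter_succ] at h2
  exact h2.2

end Aux

section Forward

variable {V : Type} [NormedAddCommGroup V]

lemma tri (a b c : V) : ‖a - c‖ ≤ ‖a - b‖ + ‖b - c‖ := by
  simpa [sub_add_sub_cancel] using norm_add_le (a - b) (b - c)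

lemma near_point [NormedSpace ℝ V] {F : Set V} (hFgd : F ⊆ gd F) (hu : ∃ u : V, ‖u‖ = 1)
    {z : V} (hz : z ∈ F) {ρ : ℝ} (hρ : 0 < ρ) :
    ∃ x ∈ F, 0 < ‖x - z‖ ∧ ‖x - z‖ < ρ := by
  obtain ⟨u, hu1⟩ := hu
  obtain ⟨δ, hδ, hprop⟩ := hFgd hz (1/2) (by norm_num)
  set r : ℝ := min δ ρ / 2 with hr
  have hr0 : 0 < r := by positivity
  set v : V := z + r • u with hv
  have hvz : ‖v - z‖ = r := by
    rw [hv, add_sub_cancel_left, norm_smul, hu1, Real.norm_eq_abs, abs_of_pos hr0, mul_one]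
  have h1 : 0 < ‖v - z‖ := by rw [hvz]; exact hr0
  have h2 : ‖v - z‖ < δ := by
    rw [hvz, hr]
    have : min δ ρ ≤ δ := min_le_left _ _
    linarith
  obtain ⟨x, hxF, hxv⟩ := hprop v h1 h2
  rw [hvz] at hxv
  refine ⟨x, hxF, ?_, ?_⟩
  · have htri : ‖v - z‖ ≤ ‖v - x‖ + ‖x - z‖ := tri v x z
    rw [hvz, norm_sub_rev v x] at htri
    nlinarith
  · have htri : ‖x - z‖ ≤ ‖x - v‖ + ‖v - z‖ := tri x v z
    rw [hvz] at htri
    have : min δ ρ ≤ ρ := min_le_right _ _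
    nlinarith

lemma key [NormedSpace ℝ V] {E : Set V} {E' : Set (ℝ × V)} (hE'H : E' ⊆ upperHalf V)
    (hΛ : conicalLimitSet E' = E) {F : Set V} (hFE : F ⊆ E) (hFgd : F ⊆ gd F)
    (hu : ∃ u : V, ‖u‖ = 1) :
    ∀ z ∈ F, ∀ θ > (0:ℝ), ∀ wpt : V, ∃ z' t v, z' ∈ F ∧ (t, v) ∈ E' ∧ 0 < t ∧ t < θ ∧
      ‖z' - v‖ ≤ t ∧ ‖z' - z‖ < θ ∧ z' ≠ wpt := by
  intro z hz θ hθ wpt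
  classical
  set ρ : ℝ := if wpt = z then θ/4 else min (θ/4) ‖wpt - z‖ with hρdef
  have hρθ : ρ ≤ θ/4 := by
    rw [hρdef]; split
    · exact le_rfl
    · exact min_le_left _ _
  have hρ0 : 0 < ρ := by
    rw [hρdef]; split
    · positivity
    · rename_i hne
      have : 0 < ‖wpt - z‖ := by
        rw [norm_pos_iff, sub_ne_zero]; exact hne
      positivity
  obtain ⟨zt, hztF, hzt0, hztρ⟩ := near_point hFgd hu hz hρ0
  have hztw : zt ≠ wpt := by
    intro hc
    by_cases hwz : wpt = z
    · rw [hc, hwz, sub_self, norm_zero] at hzt0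
      exact lt_irrefl 0 hzt0
    · have : ρ ≤ ‖wpt - z‖ := by rw [hρdef, if_neg hwz]; exact min_le_right _ _
      rw [hc] at hztρ
      linarith
  set dst : ℝ := min (θ/4) ‖zt - wpt‖ with hdst
  have hdst0 : 0 < dst := by
    have : 0 < ‖zt - wpt‖ := by rw [norm_pos_iff, sub_ne_zero]; exact hztw
    rw [hdst]; positivity
  have hztE : zt ∈ conicalLimitSet E' := by rw [hΛ]; exact hFE hztF
  obtain ⟨C, hC, w, hwmem, hwt, hwv, hwb⟩ := hztE
  obtain ⟨δ', hδ', hprop⟩ := hFgd hztF (1/(C+1)) (by positivity)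
  set b : ℝ := min (δ'/(C+1)) (dst/(2*(C+1))) with hb
  have hb0 : 0 < b := by rw [hb]; positivity
  obtain ⟨n, hn⟩ := (hwt.eventually (gt_mem_nhds hb0)).exists
  set t : ℝ := (w n).1 with htdef
  set v : V := (w n).2 with hvdef
  have ht0 : 0 < t := hE'H (hwmem n)
  have hd : ‖v - zt‖ ≤ C * t := hwb n
  have htδ : (C+1) * t < δ' := by
    have h1 : t < δ'/(C+1) := lt_of_lt_of_le hn (min_le_left _ _)
    calc (C+1)*t < (C+1)*(δ'/(C+1)) := by
          apply mul_lt_mul_of_pos_left h1; positivity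
      _ = δ' := by field_simp
  have htd : (C+1) * t < dst/2 := by
    have h1 : t < dst/(2*(C+1)) := lt_of_lt_of_le hn (min_le_right _ _)
    calc (C+1)*t < (C+1)*(dst/(2*(C+1))) := by
          apply mul_lt_mul_of_pos_left h1; positivity
      _ = dst/2 := by field_simp
  have htθ : t < θ := by
    have h1 : t ≤ (C+1)*t := by nlinarith
    have h2 : dst ≤ θ/4 := min_le_left _ _
    linarith
  have hwE : (t, v) ∈ E' := by rw [htdef, hvdef]; exact hwmem n
  by_cases hveq : ‖v - zt‖ = 0
  · refine ⟨zt, t, v, hztF, hwE, ht0, htθ, ?_, ?_, hztw⟩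
    · rw [norm_sub_rev]; rw [hveq]; exact ht0.le
    · linarith
  · have hd0 : 0 < ‖v - zt‖ := lt_of_le_of_ne (norm_nonneg _) (Ne.symm hveq)
    have hdδ : ‖v - zt‖ < δ' := by nlinarith
    obtain ⟨x, hxF, hxv⟩ := hprop v hd0 hdδ
    have hxvt : ‖x - v‖ ≤ t := by
      have h1 : (1/(C+1)) * ‖v - zt‖ ≤ (1/(C+1)) * (C*t) := by
        apply mul_le_mul_of_nonneg_left hd; positivity
      have h2 : (1/(C+1)) * (C*t) ≤ t := by
        rw [div_mul_eq_mul_div, one_mul]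
        rw [div_le_iff₀ (by positivity : (0:ℝ) < C+1)]
        nlinarith
      linarith
    have hxzt : ‖x - zt‖ < dst/2 := by
      have h1 : ‖x - zt‖ ≤ ‖x - v‖ + ‖v - zt‖ := tri x v zt
      nlinarith
    have hxw : x ≠ wpt := by
      intro hc
      have h2 : dst ≤ ‖zt - wpt‖ := min_le_right _ _
      rw [hc, norm_sub_rev] at hxzt
      linarith
    refine ⟨x, t, v, hxF, hwE, ht0, htθ, hxvt, ?_, hxw⟩
    have h1 : ‖x - z‖ ≤ ‖x - zt‖ + ‖zt - z‖ := tri x zt z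
    have h2 : dst ≤ θ/4 := min_le_left _ _
    linarith

end Forward

section ForwardMain

variable {V : Type} [NormedAddCommGroup V]

lemma forward [NormedSpace ℝ V] [CompleteSpace V] (hu : ∃ u : V, ‖u‖ = 1)
    (E : Set V) (hE : E.Countable) (hcon : IsConicalLimitSet E) :
    ∃ χ : Ordinal.{u}, gdIter E χ = ∅ := by
  classical
  by_contra hc
  push_neg at hc
  obtain ⟨F, hFne, hFE, hFgd⟩ := exists_kernel.{u} E (fun χ => (hc χ).ne_empty)
  obtain ⟨E', hE'H, hΛ⟩ := hcon
  have hEne : E.Nonempty := hFne.mono hFE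
  obtain ⟨e, he⟩ := Set.Countable.exists_eq_range hE hEne
  obtain ⟨z₀, hz₀⟩ := hFne
  -- step with packaged state
  have step : ∀ (j : ℕ) (p : {p : V × ℝ // p.1 ∈ F ∧ 0 < p.2}),
      ∃ q : {p : V × ℝ // p.1 ∈ F ∧ 0 < p.2} × (ℝ × V),
        q.2 ∈ E' ∧ 0 < q.2.1 ∧ q.2.1 ≤ (1/2:ℝ)^j ∧ ‖q.1.val.1 - q.2.2‖ ≤ q.2.1 ∧
        ‖q.1.val.1 - p.val.1‖ ≤ p.val.2 / 2 ∧ q.1.val.2 ≤ p.val.2 / 2 ∧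
        2 * q.1.val.2 ≤ q.2.1 ∧ 2 * q.1.val.2 ≤ ‖q.1.val.1 - e j‖ ∧ q.1.val.1 ≠ e j := by
    intro j p
    have hθ0 : (0:ℝ) < min p.val.2 ((1/2:ℝ)^j) / 2 := by
      have := p.2.2
      positivity
    obtain ⟨z', t, v, hz'F, htv, ht0, htθ, hz'v, hz'z, hz'e⟩ :=
      key hE'H hΛ hFE hFgd hu p.val.1 p.2.1 _ hθ0 (e j)
    have he0 : 0 < ‖z' - e j‖ := by rw [norm_pos_iff, sub_ne_zero]; exact hz'e
    set σ' : ℝ := min (p.val.2/2) (min (t/2) (‖z' - e j‖/2)) with hσ'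
    have hσ'0 : 0 < σ' := by
      have := p.2.2
      rw [hσ']; positivity
    have hθ1 : min p.val.2 ((1/2:ℝ)^j) / 2 ≤ (1/2:ℝ)^j := by
      have h1 : min p.val.2 ((1/2:ℝ)^j) ≤ (1/2:ℝ)^j := min_le_right _ _
      have h2 : (0:ℝ) < (1/2:ℝ)^j := by positivity
      linarith
    have hθ2 : min p.val.2 ((1/2:ℝ)^j) / 2 ≤ p.val.2 / 2 := by
      have h1 : min p.val.2 ((1/2:ℝ)^j) ≤ p.val.2 := min_le_left _ _
      linarith
    refine ⟨⟨⟨(z', σ'), hz'F, hσ'0⟩, (t, v)⟩, htv, ht0, le_trans htθ.le hθ1, hz'v, ?_, ?_, ?_, ?_, hz'e⟩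
    · exact le_trans hz'z.le hθ2
    · show σ' ≤ _
      exact min_le_left _ _
    · show 2 * σ' ≤ t
      have : σ' ≤ t/2 := le_trans (min_le_right _ _) (min_le_left _ _)
      linarith
    · show 2 * σ' ≤ ‖z' - e j‖
      have : σ' ≤ ‖z' - e j‖/2 := le_trans (min_le_right _ _) (min_le_right _ _)
      linarith
  choose nextf hnf using step
  obtain ⟨G, hG0, hGs⟩ : ∃ G : ℕ → {p : V × ℝ // p.1 ∈ F ∧ 0 < p.2} × (ℝ × V),
      G 0 = ⟨⟨(z₀, 1), hz₀, one_pos⟩, (1, z₀)⟩ ∧ ∀ j, G (j+1) = nextf j (G j).1 :=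
    ⟨fun n => Nat.rec (⟨⟨(z₀, 1), hz₀, one_pos⟩, (1, z₀)⟩) (fun j ih => nextf j ih.1) n,
      rfl, fun _ => rfl⟩
  set z : ℕ → V := fun j => (G j).1.val.1 with hzdef
  set σ : ℕ → ℝ := fun j => (G j).1.val.2 with hσdef
  set t : ℕ → ℝ := fun j => (G (j+1)).2.1 with htdef
  set v : ℕ → V := fun j => (G (j+1)).2.2 with hvdef
  have hσ0 : ∀ j, 0 < σ j := fun j => (G j).1.2.2
  have hspec : ∀ j, (t j, v j) ∈ E' ∧ 0 < t j ∧ t j ≤ (1/2:ℝ)^j ∧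
      ‖z (j+1) - v j‖ ≤ t j ∧ ‖z (j+1) - z j‖ ≤ σ j / 2 ∧ σ (j+1) ≤ σ j / 2 ∧
      2 * σ (j+1) ≤ t j ∧ 2 * σ (j+1) ≤ ‖z (j+1) - e j‖ ∧ z (j+1) ≠ e j := by
    intro j
    have h := hnf j (G j).1
    rw [← hGs j] at h
    simpa [hzdef, hσdef, htdef, hvdef] using h
  have hσ1 : σ 0 = 1 := by rw [hσdef]; simp [hG0]
  have hσle : ∀ j, σ j ≤ (1/2:ℝ)^j := by
    intro j
    induction j with
    | zero => rw [hσ1]; norm_num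
    | succ n ih =>
      have h1 := (hspec n).2.2.2.2.2.1
      have : (1/2:ℝ)^(n+1) = (1/2:ℝ)^n / 2 := by ring
      rw [this]
      linarith
  have hdz : ∀ j i, dist (z (j+i)) (z j) ≤ σ j - σ (j+i) := by
    intro j i
    induction i with
    | zero => simp
    | succ n ih =>
      have h1 := (hspec (j+n)).2.2.2.2.1
      have h2 := (hspec (j+n)).2.2.2.2.2.1
      have htri := dist_triangle (z (j+n+1)) (z (j+n)) (z j)
      have hd1 : dist (z (j+n+1)) (z (j+n)) ≤ σ (j+n) / 2 := by
        rw [dist_eq_norm]; exact h1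
      have : j + (n+1) = (j + n) + 1 := by ring
      rw [this]
      calc dist (z (j+n+1)) (z j) ≤ σ (j+n)/2 + (σ j - σ (j+n)) := by linarith
        _ ≤ σ j - σ ((j+n)+1) := by linarith
  have hcauchy : CauchySeq z := by
    apply cauchySeq_of_le_geometric (1/2 : ℝ) 1 (by norm_num)
    intro n
    have h1 := (hspec n).2.2.2.2.1
    have h2 := hσle n
    rw [dist_comm, dist_eq_norm]
    calc ‖z (n+1) - z n‖ ≤ σ n / 2 := h1
      _ ≤ (1/2:ℝ)^n / 2 := by linarith
      _ ≤ 1 * (1/2:ℝ)^n := by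
        have : (0:ℝ) < (1/2:ℝ)^n := by positivity
        linarith
  obtain ⟨y, hy⟩ := cauchySeq_tendsto_of_complete hcauchy
  have hyz : ∀ j, dist y (z j) ≤ σ j := by
    intro j
    have hty : Tendsto (fun i => z (i + j)) atTop (𝓝 y) := hy.comp (tendsto_add_atTop_nat j)
    have htd : Tendsto (fun i => dist (z (i + j)) (z j)) atTop (𝓝 (dist y (z j))) :=
      hty.dist tendsto_const_nhds
    apply le_of_tendsto htd
    filter_upwards with i
    have := hdz j i
    rw [Nat.add_comm j i] at this
    have := hσ0 (j + i)
    rw [Nat.add_comm j i] at this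
    linarith [hdz j i, hσ0 (j+i)]
  have hyE : y ∉ E := by
    intro hyE
    rw [he, Set.mem_range] at hyE
    obtain ⟨k, hk⟩ := hyE
    have h1 := (hspec k).2.2.2.2.2.2.2.1
    have h2 := hyz (k+1)
    rw [hk] at h1
    rw [dist_eq_norm] at h2
    rw [norm_sub_rev] at h2
    have := hσ0 (k+1)
    linarith
  have hyΛ : y ∈ conicalLimitSet E' := by
    refine ⟨2, by norm_num, fun n => (t n, v n), fun n => (hspec n).1, ?_, ?_, ?_⟩
    · apply tendsto_of_tendsto_of_tendsto_of_le_of_le tendsto_const_nhds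
        (tendsto_pow_atTop_nhds_zero_of_lt_one (by norm_num) (by norm_num))
        (fun n => (hspec n).2.1.le) (fun n => (hspec n).2.2.1)
    · have hb : ∀ n, ‖v n - y‖ ≤ 2 * t n := by
        intro n
        have h1 := (hspec n).2.2.2.1
        have h2 := hyz (n+1)
        have h3 := (hspec n).2.2.2.2.2.2.1
        have htri := tri (v n) (z (n+1)) y
        rw [norm_sub_rev (v n) (z (n+1))] at htri
        rw [dist_comm, dist_eq_norm] at h2
        have h5 := (hspec n).2.1
        linarith
      rw [tendsto_iff_dist_tendsto_zero]
      have hT : Tendsto (fun n : ℕ => 2 * (1/2:ℝ)^n) atTop (𝓝 0) := by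
        have := (tendsto_pow_atTop_nhds_zero_of_lt_one
          (by norm_num : (0:ℝ) ≤ 1/2) (by norm_num : (1/2:ℝ) < 1)).const_mul 2
        simpa using this
      have hb' : ∀ n : ℕ, dist (v n) y ≤ 2 * (1/2:ℝ)^n := by
        intro n
        have h4 := (hspec n).2.2.1
        rw [dist_eq_norm]
        have := hb n
        linarith
      exact squeeze_zero (fun n => dist_nonneg) hb' hT
    · intro n
      have h1 := (hspec n).2.2.2.1
      have h2 := hyz (n+1)
      have h3 := (hspec n).2.2.2.2.2.2.1
      have htri := tri (v n) (z (n+1)) y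
      rw [norm_sub_rev (v n) (z (n+1))] at htri
      rw [dist_comm, dist_eq_norm] at h2
      have h5 := (hspec n).2.1
      show ‖v n - y‖ ≤ 2 * t n
      linarith
  rw [hΛ] at hyΛ
  exact hyE hyΛ

end ForwardMain

section Backward

variable {V : Type} [NormedAddCommGroup V]

lemma backward (E : Set V) (hE : E.Countable)
    (hemp : ∃ χ : Ordinal.{u}, gdIter E χ = ∅) : IsConicalLimitSet E := by
  classical
  have hcnt : Countable ↥E := hE.to_subtype
  obtain ⟨f, hf⟩ := exists_injective_nat ↥E
  set nV : V → ℕ := fun x => if h : x ∈ E then f ⟨x, h⟩ else 0 with hnVdef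
  have hnVinj : ∀ x ∈ E, ∀ y ∈ E, nV x = nV y → x = y := by
    intro x hx y hy hxy
    rw [hnVdef] at hxy
    simp only [dif_pos hx, dif_pos hy] at hxy
    exact Subtype.ext_iff.mp (hf hxy)
  have hnVfin : ∀ N : ℕ, {x | x ∈ E ∧ nV x < N}.Finite := by
    intro N
    apply Set.Finite.of_finite_image (f := nV)
    · apply Set.Finite.subset (Set.finite_Iio N)
      rintro n ⟨x, ⟨_, hx2⟩, rfl⟩
      exact hx2
    · intro a ha b hb hab
      exact hnVinj a ha.1 b hb.1 hab
  have hrank : ∀ x ∈ E, ∃ r : Ordinal.{u}, ∃ ε : ℝ, x ∈ gdIter E r ∧ 0 < ε ∧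
      ∀ δ > 0, ∃ v, 0 < ‖v - x‖ ∧ ‖v - x‖ < δ ∧
        ∀ z ∈ gdIter E r, ε * ‖v - x‖ ≤ ‖z - v‖ := by
    intro x hx
    obtain ⟨r, hr1, hr2⟩ := exists_rank E hemp hx
    obtain ⟨ε, hε, hprop⟩ := notgd hr2
    exact ⟨r, ε, hr1, hε, hprop⟩
  choose! r ε hmem hε htest using hrank
  set lam : V → ℝ := fun x => min (ε x) 1 / ((nV x : ℝ) + 1) with hlamdef
  have hlam0 : ∀ x ∈ E, 0 < lam x := by
    intro x hx
    have := hε x hx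
    rw [hlamdef]
    positivity
  have hlameq : ∀ x, lam x = min (ε x) 1 / ((nV x : ℝ) + 1) := fun _ => rfl
  have hlam1 : ∀ x, lam x ≤ 1 := by
    intro x
    rw [hlameq, div_le_one (by positivity)]
    have h1 : min (ε x) 1 ≤ 1 := min_le_right _ _
    have h2 : (1:ℝ) ≤ (nV x : ℝ) + 1 := by
      have : (0:ℝ) ≤ (nV x : ℝ) := Nat.cast_nonneg _
      linarith
    linarith
  set E' : Set (ℝ × V) := {p | ∃ x, ∃ _ : x ∈ E, ∃ v : V,
    p = (lam x * ‖v - x‖, v) ∧ 0 < ‖v - x‖ ∧ ‖v - x‖ ≤ (1/2:ℝ)^(nV x) ∧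
    ∀ z ∈ gdIter E (r x), ε x * ‖v - x‖ ≤ ‖z - v‖} with hE'def
  refine ⟨E', ?_, ?_⟩
  · rintro ⟨t, u⟩ ⟨x, hx, v, hp, h1, h2, h3⟩
    have ht : t = lam x * ‖v - x‖ := congrArg Prod.fst hp
    have hl := hlam0 x hx
    show 0 < t
    rw [ht]
    exact mul_pos hl h1
  · ext y
    constructor
    · -- hard direction
      rintro ⟨C, hC, w, hwmem, hwt, hwv, hwb⟩
      by_contra hyE
      have hwmem' : ∀ k, ∃ x, ∃ _ : x ∈ E, ∃ v : V,
          w k = (lam x * ‖v - x‖, v) ∧ 0 < ‖v - x‖ ∧ ‖v - x‖ ≤ (1/2:ℝ)^(nV x) ∧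
          ∀ z ∈ gdIter E (r x), ε x * ‖v - x‖ ≤ ‖z - v‖ := fun k => hwmem k
      choose x hx v hp h1 h2 h3 using hwmem'
      have hw1 : ∀ k, (w k).1 = lam (x k) * ‖v k - x k‖ := fun k => by rw [hp k]
      have hw2 : ∀ k, (w k).2 = v k := fun k => by rw [hp k]
      by_cases hfin : ∃ x', {k | x k = x'}.Infinite
      · obtain ⟨x', hinf⟩ := hfin
        obtain ⟨k₁, hk₁⟩ := hinf.nonempty
        have hx'E : x' ∈ E := by rw [← hk₁]; exact hx k₁
        have hlx' := hlam0 x' hx'E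
        have hyx' : y = x' := by
          by_contra hne
          have hpos : 0 < ‖y - x'‖ := by rw [norm_pos_iff, sub_ne_zero]; exact hne
          have hinvl : 0 < 1 / lam x' := one_div_pos.mpr hlx'
          have hden : 0 < C + 1/lam x' + 1 := by linarith
          have hb0 : 0 < ‖y - x'‖ / (C + 1/lam x' + 1) := div_pos hpos hden
          obtain ⟨N, hN⟩ := eventually_atTop.mp (hwt.eventually (gt_mem_nhds hb0))
          obtain ⟨k, hkmem, hkN⟩ := hinf.exists_gt N
          have hkmem' : x k = x' := hkmem
          have hk' : (w k).1 < ‖y - x'‖ / (C + 1/lam x' + 1) := hN k hkN.le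
          have hvk : ‖v k - x'‖ = (w k).1 / lam x' := by
            rw [hw1 k, hkmem', mul_div_cancel_left₀ _ (ne_of_gt hlx')]
          have htri1 : ‖y - x'‖ ≤ ‖y - v k‖ + ‖v k - x'‖ := tri y (v k) x'
          have hyv : ‖y - v k‖ ≤ C * (w k).1 := by
            rw [norm_sub_rev]
            have := hwb k
            rwa [hw2 k] at this
          have ht0 : 0 < (w k).1 := by
            have h1' := h1 k
            rw [hkmem'] at h1'
            rw [hw1 k, hkmem']
            exact mul_pos hlx' h1'
          have hDB : ‖y - x'‖ ≤ (C + 1/lam x') * (w k).1 := by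
            rw [hvk] at htri1
            have heq : (w k).1 / lam x' = (1/lam x') * (w k).1 := by ring
            rw [heq] at htri1
            linarith
          have h20 : (w k).1 * (C + 1/lam x' + 1) < ‖y - x'‖ :=
            (lt_div_iff₀ hden).mp hk'
          nlinarith [hDB, h20, ht0]
        exact hyE (by rw [hyx']; exact hx'E)
      · push_neg at hfin
        have hnbig : ∀ N : ℕ, ∃ K : ℕ, ∀ k, K ≤ k → N ≤ nV (x k) := by
          intro N
          have hfin2 : {k | nV (x k) < N}.Finite := by
            apply Set.Finite.subset ((hnVfin N).biUnion (fun x' _ => (hfin x')))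
            intro k hk
            exact Set.mem_biUnion (⟨hx k, hk⟩ : x k ∈ {x' | x' ∈ E ∧ nV x' < N}) (show x k = x k from rfl)
          obtain ⟨b, hb⟩ := hfin2.bddAbove
          refine ⟨b + 1, fun k hk => ?_⟩
          by_contra hcon
          push_neg at hcon
          have := hb (show k ∈ {k | nV (x k) < N} from hcon)
          omega
        have hnatT : Tendsto (fun k => nV (x k)) atTop atTop := by
          apply tendsto_atTop.mpr
          intro N
          obtain ⟨K, hK⟩ := hnbig N
          exact eventually_atTop.mpr ⟨K, hK⟩
        have hpowT : Tendsto (fun k => ((1:ℝ)/2)^(nV (x k))) atTop (𝓝 0) :=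
          (tendsto_pow_atTop_nhds_zero_of_lt_one (by norm_num : (0:ℝ) ≤ 1/2)
            (by norm_num : (1/2:ℝ) < 1)).comp hnatT
        have hxyT : Tendsto x atTop (𝓝 y) := by
          rw [tendsto_iff_dist_tendsto_zero]
          have hbound : ∀ k, dist (x k) y ≤ (1/2:ℝ)^(nV (x k)) + C * (w k).1 := by
            intro k
            have htri1 : ‖x k - y‖ ≤ ‖x k - v k‖ + ‖v k - y‖ := tri (x k) (v k) y
            have hv1 : ‖x k - v k‖ ≤ (1/2:ℝ)^(nV (x k)) := by
              rw [norm_sub_rev]; exact h2 k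
            have hv2 : ‖v k - y‖ ≤ C * (w k).1 := by
              have := hwb k; rwa [hw2 k] at this
            rw [dist_eq_norm]
            linarith
          have hlimsum : Tendsto (fun k => (1/2:ℝ)^(nV (x k)) + C * (w k).1) atTop (𝓝 0) := by
            have h20 := (hwt.const_mul C)
            rw [mul_zero] at h20
            have := hpowT.add h20
            rwa [add_zero] at this
          exact squeeze_zero (fun k => dist_nonneg) hbound hlimsum
        obtain ⟨N, hN⟩ := exists_nat_gt C
        obtain ⟨K, hK⟩ := hnbig N
        set RS : Set Ordinal.{u} := (fun k => r (x k)) '' Set.Ici K with hRS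
        have hRSne : RS.Nonempty := ⟨r (x K), ⟨K, Set.self_mem_Ici, rfl⟩⟩
        obtain ⟨k₀, hk₀K, hk₀⟩ := csInf_mem hRSne
        have hk₀' : r (x k₀) = sInf RS := hk₀
        have hminle : ∀ j, K ≤ j → r (x k₀) ≤ r (x j) := by
          intro j hj
          rw [hk₀']
          exact csInf_le (OrderBot.bddBelow _) ⟨j, hj, rfl⟩
        have hcl : y ∈ closure (gdIter E (r (x k₀))) := by
          apply mem_closure_of_tendsto hxyT
          filter_upwards [eventually_ge_atTop K] with j hj
          exact gdIter_anti E _ _ (hminle j hj) (hmem (x j) (hx j))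
        have hclean : ε (x k₀) * ‖v k₀ - x k₀‖ ≤ ‖y - v k₀‖ := by
          have hsub : gdIter E (r (x k₀)) ⊆
              {z | ε (x k₀) * ‖v k₀ - x k₀‖ ≤ dist z (v k₀)} := by
            intro z hz
            rw [Set.mem_setOf_eq, dist_eq_norm]
            exact h3 k₀ z hz
          have hcls : IsClosed {z | ε (x k₀) * ‖v k₀ - x k₀‖ ≤ dist z (v k₀)} :=
            isClosed_le continuous_const (Continuous.dist continuous_id continuous_const)
          have := closure_minimal hsub hcls hcl
          rwa [Set.mem_setOf_eq, dist_eq_norm] at this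
        have hyv : ‖y - v k₀‖ ≤ C * (lam (x k₀) * ‖v k₀ - x k₀‖) := by
          have := hwb k₀
          rw [hw1 k₀, hw2 k₀] at this
          rwa [norm_sub_rev]
        have hs0 : 0 < ‖v k₀ - x k₀‖ := h1 k₀
        have hxk₀E : x k₀ ∈ E := hx k₀
        have hεp := hε (x k₀) hxk₀E
        set M : ℝ := (nV (x k₀) : ℝ) + 1 with hM
        set μ : ℝ := min (ε (x k₀)) 1 with hμ
        have hμ0 : 0 < μ := by rw [hμ]; exact lt_min hεp one_pos
        have hM0 : 0 < M := by rw [hM]; positivity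
        have hεC : ε (x k₀) ≤ C * (μ / M) := by
          have h5 : ε (x k₀) * ‖v k₀ - x k₀‖ ≤ C * ((μ / M) * ‖v k₀ - x k₀‖) := by
            calc ε (x k₀) * ‖v k₀ - x k₀‖ ≤ ‖y - v k₀‖ := hclean
              _ ≤ C * (lam (x k₀) * ‖v k₀ - x k₀‖) := hyv
              _ = C * ((μ / M) * ‖v k₀ - x k₀‖) := by rw [hlameq, hμ, hM]
          have h6 : ε (x k₀) * ‖v k₀ - x k₀‖ ≤ (C * (μ / M)) * ‖v k₀ - x k₀‖ := by
            calc ε (x k₀) * ‖v k₀ - x k₀‖ ≤ C * ((μ / M) * ‖v k₀ - x k₀‖) := h5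
              _ = (C * (μ / M)) * ‖v k₀ - x k₀‖ := by ring
          exact le_of_mul_le_mul_right h6 hs0
        have hMC : M ≤ C := by
          have h14 : μ ≤ C * μ / M := by
            calc μ ≤ ε (x k₀) := by rw [hμ]; exact min_le_left _ _
              _ ≤ C * (μ / M) := hεC
              _ = C * μ / M := by ring
          have h15 : μ * M ≤ C * μ := (le_div_iff₀ hM0).mp h14
          have h16 : M * μ ≤ C * μ := by linarith [h15, mul_comm μ M]
          exact le_of_mul_le_mul_right h16 hμ0
        have hNK : (N:ℝ) ≤ (nV (x k₀) : ℝ) := by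
          exact_mod_cast hK k₀ hk₀K
        have : (N:ℝ) < M := by rw [hM]; linarith
        linarith
    · -- easy direction E ⊆ conical limit set
      intro hyE
      have hly := hlam0 y hyE
      refine ⟨1 / lam y, one_div_pos.mpr hly, ?_⟩
      have hpts : ∀ k : ℕ, ∃ v, 0 < ‖v - y‖ ∧
          ‖v - y‖ < min ((1/2:ℝ)^(nV y)) ((1/2:ℝ)^k) ∧
          ∀ z ∈ gdIter E (r y), ε y * ‖v - y‖ ≤ ‖z - v‖ := by
        intro k
        exact htest y hyE _ (by positivity)
      choose vv hv1 hv2 hv3 using hpts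
      refine ⟨fun k => (lam y * ‖vv k - y‖, vv k), ?_, ?_, ?_, ?_⟩
      · intro k
        exact ⟨y, hyE, vv k, rfl, hv1 k, le_trans (hv2 k).le (min_le_left _ _), hv3 k⟩
      · apply squeeze_zero (fun k => mul_nonneg hly.le (norm_nonneg _))
          (g := fun k => (1/2:ℝ)^k) ?_ ?_
        · intro k
          have hb1 : ‖vv k - y‖ ≤ (1/2:ℝ)^k := le_trans (hv2 k).le (min_le_right _ _)
          calc lam y * ‖vv k - y‖ ≤ 1 * ‖vv k - y‖ :=
                mul_le_mul_of_nonneg_right (hlam1 y) (norm_nonneg _)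
            _ = ‖vv k - y‖ := one_mul _
            _ ≤ (1/2:ℝ)^k := hb1
        · exact tendsto_pow_atTop_nhds_zero_of_lt_one (by norm_num) (by norm_num)
      · rw [tendsto_iff_dist_tendsto_zero]
        apply squeeze_zero (fun k => dist_nonneg) (g := fun k => (1/2:ℝ)^k) ?_ ?_
        · intro k
          rw [dist_eq_norm]
          exact le_trans (hv2 k).le (min_le_right _ _)
        · exact tendsto_pow_atTop_nhds_zero_of_lt_one (by norm_num) (by norm_num)
      · intro k
        show ‖vv k - y‖ ≤ (1 / lam y) * (lam y * ‖vv k - y‖)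
        rw [← mul_assoc, one_div, inv_mul_cancel₀ (ne_of_gt hly), one_mul]

end Backward

/-- A countable set `E ⊆ ℝ^m` is a conical limit set iff its transfinite `gd`-iteration
eventually becomes empty. -/
theorem countable_isConicalLimitSet_iff_gdIter_empty (m : ℕ) (hm : 1 ≤ m)
    (E : Set (EuclideanSpace ℝ (Fin m))) (hE : E.Countable) :
    IsConicalLimitSet E ↔ ∃ χ : Ordinal, gdIter E χ = ∅ := by
  have hu : ∃ u : EuclideanSpace ℝ (Fin m), ‖u‖ = 1 := by
    refine ⟨EuclideanSpace.single (⟨0, hm⟩ : Fin m) (1:ℝ), ?_⟩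
    rw [EuclideanSpace.norm_single]
    norm_num
  constructor
  · intro h
    exact forward hu E hE h
  · intro h
    exact backward E hE h
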